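/- Assume boldface Π¹₁-determinacy. Let Q be a level-2 tree, let q ∈ dom(Q), and let ᾱ be a tuple respecting Q_tree(q) such that every entry of ᾱ is additively closed (closed under ordinal addition) and greater than ω. Then ᾱ ⊕ q is the least upper bound in (rep(Q), <^Q) of the nonempty set of all elements ᾱ′ ⊕ q⌢(−1) ∈ rep(Q), where ᾱ′ ranges over the tuples respecting Q(q) that agree with ᾱ on Q_tree(q). -/

import Mathlib

noncomputable section

/-- Brouwer–Kleene strict order on finite sequences, relative to a strict order `lt`
on entries: `s <_BK t` iff `s` properly extends `t`, or at the least position where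
both are defined and they differ, the entry of `s` is smaller; `[]` is greatest. -/
def BKltBy {α : Type*} (lt : α → α → Prop) : List α → List α → Prop
  | [], _ => False
  | _ :: _, [] => True
  | a :: s, b :: t => lt a b ∨ (a = b ∧ BKltBy lt s t)

/-- The Brouwer–Kleene order on finite sequences of natural numbers. -/
def BKlt : List ℕ → List ℕ → Prop := BKltBy (· < ·)

/-- A level-1 tree: a set of nonempty finite sequences of naturals such that whenever
`s⌢(n) ∈ P`: if `s ≠ []` then `s ∈ P`, and `s⌢(m) ∈ P` for every `m < n`. -/
def IsLevel1Tree (P : Set (List ℕ)) : Prop :=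
  (∀ s ∈ P, s ≠ []) ∧
  ∀ (s : List ℕ) (n : ℕ), s ++ [n] ∈ P →
    (s ≠ [] → s ∈ P) ∧ ∀ m < n, s ++ [m] ∈ P

/-- A level-1 tree is regular iff the sequence `(1)` is not in it. -/
def Regular1 (P : Set (List ℕ)) : Prop := ([1] : List ℕ) ∉ P

/-- `P` is Π¹₁-wellfounded: there is no infinite branch through `P`. -/
def Pi11WF (P : Set (List ℕ)) : Prop :=
  ¬ ∃ x : ℕ → ℕ, ∀ n : ℕ, 0 < n → (List.ofFn fun i : Fin n => x i) ∈ P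

/-- `rep(P)`: the pair `(p, none)` codes the element `(p)` and `(p, some n)` codes
`(p, n)`. -/
def Rep1 (P : Set (List ℕ)) : Set (List ℕ × Option ℕ) := {x | x.1 ∈ P}

def optNatLt : Option ℕ → Option ℕ → Prop
  | some n, some m => n < m
  | some _, none => True
  | _, _ => False

/-- The order `<^P` on `rep(P)`. -/
def Rep1lt (x y : List ℕ × Option ℕ) : Prop :=
  BKlt x.1 y.1 ∨ (x.1 = y.1 ∧ optNatLt x.2 y.2)

/-- The first uncountable ordinal. -/
def omega1 : Ordinal := (Cardinal.aleph 1).ord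

/-- The tuple `(f p)_{p ∈ P}` respects the level-1 tree `P`: each entry is a countable
limit ordinal and `p ↦ f p` is order preserving from `(P, <_BK)` to the ordinals. -/
def Respects1 (P : Set (List ℕ)) (f : List ℕ → Ordinal) : Prop :=
  (∀ p ∈ P, f p < omega1 ∧ Order.IsSuccLimit (f p)) ∧
  ∀ p ∈ P, ∀ q ∈ P, BKlt p q → f p < f q

/-- `σ` factors `(P, W)`: `σ(∅) = ∅` and `σ` preserves the Brouwer–Kleene order. -/
def Factors (P W : Set (List ℕ)) (σ : List ℕ → List ℕ) : Prop :=
  σ [] = [] ∧ (∀ p ∈ P, σ p ∈ insert ([] : List ℕ) W) ∧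
  ∀ s ∈ insert ([] : List ℕ) P, ∀ t ∈ insert ([] : List ℕ) P,
    BKlt s t → BKlt (σ s) (σ t)

/-- Partial level ≤1 tree `(P, t)`; `t = none` codes the value `-1`. -/
def IsPartialLevelLe1Tree (P : Set (List ℕ)) (t : Option (List ℕ)) : Prop :=
  P.Finite ∧ IsLevel1Tree P ∧ Regular1 P ∧
  (match t with
   | none => P.Nonempty
   | some s => s ∉ P ∧ IsLevel1Tree (insert s P) ∧ Regular1 (insert s P))

/-- The tuple coded by `f` on `P` together with the value `v` at `t` respects the
partial level ≤1 tree `(P, t)`. -/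
def RespectsP1 (P : Set (List ℕ)) (t : Option (List ℕ)) (f : List ℕ → Ordinal)
    (v : Ordinal) : Prop :=
  match t with
  | none => Respects1 P f ∧ v < Ordinal.omega0
  | some s => Respects1 P f ∧
      Respects1 (insert s P) (fun p => if p = s then v else f p)

/-- A level-2 tree of uniform cofinalities. -/
structure Level2Tree where
  dom : Set (List (List ℕ))
  tr : List (List ℕ) → Set (List ℕ)
  nd : List (List ℕ) → Option (List ℕ)
  nil_mem : [] ∈ dom
  take_mem : ∀ q ∈ dom, ∀ n : ℕ, q.take n ∈ dom
  lvl1 : ∀ q ∈ dom, IsLevel1Tree {a : List ℕ | q ++ [a] ∈ dom}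
  tr_nil : tr [] = ∅
  nd_nil : nd [] = some [0]
  ptree : ∀ q ∈ dom, IsPartialLevelLe1Tree (tr q) (nd q)
  compl : ∀ q ∈ dom, ∀ l : ℕ, l < q.length →
    ∃ s : List ℕ, nd (q.take l) = some s ∧ tr (q.take (l + 1)) = insert s (tr (q.take l))

/-- The node `Q_node(q)`, read as an element of `ℕ^{<ω}`. -/
def Level2Tree.ndVal (Q : Level2Tree) (q : List (List ℕ)) : List ℕ := (Q.nd q).getD []

/-- The interleaved sequence `ᾱ ⊕ q`. -/
def Level2Tree.oplus (Q : Level2Tree) (f : List ℕ → Ordinal) (q : List (List ℕ)) :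
    List (Ordinal × Option (List ℕ)) :=
  (List.range q.length).map fun i => (f (Q.ndVal (q.take i)), some (q.getD i []))

/-- The interleaved sequence `ᾱ ⊕ q⌢(-1)`, where `v` is the entry of the tuple at
the node `Q_node(q)`. -/
def Level2Tree.oplusNeg (Q : Level2Tree) (f : List ℕ → Ordinal) (v : Ordinal)
    (q : List (List ℕ)) : List (Ordinal × Option (List ℕ)) :=
  Q.oplus f q ++ [(v, none)]

def optNodeLt : Option (List ℕ) → Option (List ℕ) → Prop
  | none, some _ => True
  | some s, some t => BKlt s t
  | _, _ => False

def entryLt (x y : Ordinal × Option (List ℕ)) : Prop :=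
  x.1 < y.1 ∨ (x.1 = y.1 ∧ optNodeLt x.2 y.2)

/-- The order `<^{²Q}` on interleaved sequences. -/
def Rep2lt : List (Ordinal × Option (List ℕ)) → List (Ordinal × Option (List ℕ)) → Prop :=
  BKltBy entryLt

/-- `rep(²Q)`. -/
def Level2Tree.rep (Q : Level2Tree) : Set (List (Ordinal × Option (List ℕ))) :=
  {x | (∃ q ∈ Q.dom, ∃ f, Respects1 (Q.tr q) f ∧ x = Q.oplus f q) ∨
       (∃ q ∈ Q.dom, ∃ f v, RespectsP1 (Q.tr q) (Q.nd q) f v ∧ x = Q.oplusNeg f v q)}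

/-- Π¹₂-wellfoundedness of a level-2 tree. -/
def Level2Tree.Pi12WF (Q : Level2Tree) : Prop :=
  (∀ q ∈ Q.dom, Pi11WF {a : List ℕ | q ++ [a] ∈ Q.dom}) ∧
  ∀ y : ℕ → List ℕ, (∀ n : ℕ, (List.ofFn fun i : Fin n => y i) ∈ Q.dom) →
    ¬ Pi11WF (⋃ n : ℕ, Q.tr (List.ofFn fun i : Fin n => y i))

/-- The type of elements of `rep(Q)` for a level ≤2 tree `Q`: `inl` for the level-1
part, `inr` for the level-2 part. -/
abbrev RepLe2Elt := (List ℕ × Option ℕ) ⊕ (List (Ordinal × Option (List ℕ)))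

/-- `rep(Q)` for the level ≤2 tree `Q = (P, Q₂)`. -/
def RepLe2 (P : Set (List ℕ)) (Q : Level2Tree) : Set RepLe2Elt :=
  {x | match x with
       | Sum.inl a => a ∈ Rep1 P
       | Sum.inr b => b ∈ Q.rep}

/-- The order `<^Q` for a level ≤2 tree: the level-1 part comes first. -/
def RepLe2lt : RepLe2Elt → RepLe2Elt → Prop := Sum.Lex Rep1lt Rep2lt

/-- Π¹₂-wellfoundedness of a level ≤2 tree. -/
def Pi12WFle2 (P : Set (List ℕ)) (Q : Level2Tree) : Prop :=
  Pi11WF P ∧ Q.Pi12WF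

/-- The sequence of the first `n` values of `x`. -/
def prefixSeq {α : Type*} (x : ℕ → α) (n : ℕ) : List α := List.ofFn fun i : Fin n => x i

/-- `σ` is a winning strategy for Player I (who plays at even rounds) in the game
with payoff set `A`. -/
def WinningStratI (A : Set (ℕ → ℕ)) (σ : List ℕ → ℕ) : Prop :=
  ∀ x : ℕ → ℕ, (∀ n, x (2 * n) = σ (prefixSeq x (2 * n))) → x ∈ A

/-- `σ` is a winning strategy for Player II (who plays at odd rounds). -/
def WinningStratII (A : Set (ℕ → ℕ)) (σ : List ℕ → ℕ) : Prop :=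
  ∀ x : ℕ → ℕ, (∀ n, x (2 * n + 1) = σ (prefixSeq x (2 * n + 1))) → x ∉ A

/-- The Gale–Stewart game with payoff `A` is determined. -/
def GameDetermined (A : Set (ℕ → ℕ)) : Prop :=
  (∃ σ, WinningStratI A σ) ∨ (∃ σ, WinningStratII A σ)

/-- `A` is analytic: the projection of a closed subset of the plane of Baire space,
i.e., the projection of the set of branches of a set of pairs of finite sequences. -/
def IsAnalytic (A : Set (ℕ → ℕ)) : Prop :=
  ∃ T : Set (List ℕ × List ℕ),
    A = {x | ∃ y : ℕ → ℕ, ∀ n : ℕ, (prefixSeq x n, prefixSeq y n) ∈ T}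

/-- Boldface Π¹₁-determinacy: every game with coanalytic payoff is determined. -/
def BoldfacePi11Determinacy : Prop :=
  ∀ A : Set (ℕ → ℕ), IsAnalytic Aᶜ → GameDetermined A

/-- An infinite level-1 tower. -/
def IsInfLevel1Tower (P : ℕ → Set (List ℕ)) : Prop :=
  ∀ i : ℕ, IsLevel1Tree (P i) ∧ (P i).Finite ∧ (P i).ncard = i ∧
    ∀ j : ℕ, i < j → P i ⊆ P j

/-- `o` is a limit point of the set of ordinals `E`. -/
def IsLimitPtOf (E : Set Ordinal) (o : Ordinal) : Prop :=
  (∃ e ∈ E, e < o) ∧ ∀ b < o, ∃ e ∈ E, b < e ∧ e < o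

/-- `E` is a club in `ω₁`. -/
def IsClubInOmega1 (E : Set Ordinal) : Prop :=
  (∀ o ∈ E, o < omega1) ∧
  (∀ o < omega1, ∃ e ∈ E, o < e) ∧
  ∀ o < omega1, IsLimitPtOf E o → o ∈ E

/-- The tuple coded by `f` lies in `[E]^{P↑}`. -/
def RespectsIn (E : Set Ordinal) (P : Set (List ℕ)) (f : List ℕ → Ordinal) : Prop :=
  Respects1 P f ∧ ∀ p ∈ P, f p ∈ E ∧ IsLimitPtOf E (f p)

/-- The tuple coded by `(f, v)` lies in `[E]^{(P,t)↑}`. -/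
def RespectsPIn (E : Set Ordinal) (P : Set (List ℕ)) (t : Option (List ℕ))
    (f : List ℕ → Ordinal) (v : Ordinal) : Prop :=
  RespectsP1 P t f v ∧ (∀ p ∈ P, f p ∈ E ∧ IsLimitPtOf E (f p)) ∧
  (t ≠ none → v ∈ E)

/-- `rep(²Q) ↾ E`. -/
def Level2Tree.repRestrict (Q : Level2Tree) (E : Set Ordinal) :
    Set (List (Ordinal × Option (List ℕ))) :=
  {x | (∃ q ∈ Q.dom, ∃ f, RespectsIn E (Q.tr q) f ∧ x = Q.oplus f q) ∨
       (∃ q ∈ Q.dom, ∃ f v, RespectsPIn E (Q.tr q) (Q.nd q) f v ∧ x = Q.oplusNeg f v q)}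

/-- `rep(Q) ↾ E` for a level ≤2 tree `Q = (P, Q₂)`. -/
def RepLe2Restrict (P : Set (List ℕ)) (Q : Level2Tree) (E : Set Ordinal) :
    Set RepLe2Elt :=
  {x | match x with
       | Sum.inl a => a ∈ Rep1 P
       | Sum.inr b => b ∈ Q.repRestrict E}

/-- `C` is a closed subset of `X` in the order topology of the strict linear order
`lt` on `X`: `C` contains all of its one-sided limit points in `X`. -/
def OrderClosedIn {σ : Type*} (lt : σ → σ → Prop) (X C : Set σ) : Prop :=
  (∀ v ∈ X, (∃ w ∈ C, lt w v) →
      (∀ w ∈ X, lt w v → ∃ u ∈ C, lt w u ∧ lt u v) → v ∈ C) ∧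
  (∀ v ∈ X, (∃ w ∈ C, lt v w) →
      (∀ w ∈ X, lt v w → ∃ u ∈ C, lt v u ∧ lt u w) → v ∈ C)

end

/-- The set of all elements `ᾱ' ⊕ q⌢(-1)` of `rep(Q)` where `ᾱ'` ranges over the
tuples respecting `Q(q)` that agree with the tuple coded by `f` on `Q_tree(q)`. -/
def sideSet (Q : Level2Tree) (f : List ℕ → Ordinal) (q : List (List ℕ)) :
    Set (List (Ordinal × Option (List ℕ))) :=
  {x | ∃ f' v, RespectsP1 (Q.tr q) (Q.nd q) f' v ∧
      (∀ p ∈ Q.tr q, f' p = f p) ∧ x = Q.oplusNeg f' v q}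

namespace Stmt11Aux

section BK
variable {α : Type*} {lt : α → α → Prop}

theorem bk_nil_lt {t : List α} : ¬ BKltBy lt [] t := fun h => h

theorem bk_asymm (h : ∀ a b, lt a b → ¬ lt b a) :
    ∀ s t : List α, BKltBy lt s t → ¬ BKltBy lt t s := by
  intro s
  induction s with
  | nil => intro t ht; exact absurd ht bk_nil_lt
  | cons a s ih =>
    intro t ht hts
    cases t with
    | nil => exact hts
    | cons b t =>
      rcases ht with h1 | ⟨rfl, h2⟩
      · rcases hts with h1' | ⟨rfl, h2'⟩
        · exact h _ _ h1 h1'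
        · exact h _ _ h1 h1
      · rcases hts with h1' | ⟨_, h2'⟩
        · exact h _ _ h1' h1'
        · exact ih t h2 h2'

theorem bk_irrefl (h : ∀ a b, lt a b → ¬ lt b a) (s : List α) : ¬ BKltBy lt s s :=
  fun hs => bk_asymm h s s hs hs

theorem bk_trans (h : ∀ a b c, lt a b → lt b c → lt a c) :
    ∀ s t u : List α, BKltBy lt s t → BKltBy lt t u → BKltBy lt s u := by
  intro s
  induction s with
  | nil => intro t u ht _; exact absurd ht bk_nil_lt
  | cons a s ih =>
    intro t u ht htu
    cases t with
    | nil => exact absurd htu bk_nil_lt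
    | cons b t =>
      cases u with
      | nil => trivial
      | cons c u =>
        rcases ht with h1 | ⟨rfl, h2⟩
        · rcases htu with h1' | ⟨rfl, h2'⟩
          · exact Or.inl (h _ _ _ h1 h1')
          · exact Or.inl h1
        · rcases htu with h1' | ⟨rfl, h2'⟩
          · exact Or.inl h1'
          · exact Or.inr ⟨rfl, ih t u h2 h2'⟩

theorem bk_total (h : ∀ a b : α, a = b ∨ lt a b ∨ lt b a) :
    ∀ s t : List α, s = t ∨ BKltBy lt s t ∨ BKltBy lt t s := by
  intro s
  induction s with
  | nil =>
    intro t
    cases t with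
    | nil => exact Or.inl rfl
    | cons b t => exact Or.inr (Or.inr trivial)
  | cons a s ih =>
    intro t
    cases t with
    | nil => exact Or.inr (Or.inl trivial)
    | cons b t =>
      rcases h a b with rfl | h1 | h1
      · rcases ih t with rfl | h2 | h2
        · exact Or.inl rfl
        · exact Or.inr (Or.inl (Or.inr ⟨rfl, h2⟩))
        · exact Or.inr (Or.inr (Or.inr ⟨rfl, h2⟩))
      · exact Or.inr (Or.inl (Or.inl h1))
      · exact Or.inr (Or.inr (Or.inl h1))

theorem bk_append_right : ∀ (l m : List α), m ≠ [] → BKltBy lt (l ++ m) l := by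
  intro l
  induction l with
  | nil =>
    intro m hm
    cases m with
    | nil => exact absurd rfl hm
    | cons a m => exact trivial
  | cons a l ih =>
    intro m hm
    exact Or.inr ⟨rfl, ih m hm⟩

theorem bk_append_left (l : List α) {s t : List α} (h : BKltBy lt s t) :
    BKltBy lt (l ++ s) (l ++ t) := by
  induction l with
  | nil => exact h
  | cons a l ih => exact Or.inr ⟨rfl, ih⟩

theorem bk_extend_not_prefix : ∀ (z w : List α), BKltBy lt z w → ¬ w <+: z →
    ∀ u : List α, BKltBy lt z (w ++ u) := by
  intro z
  induction z with
  | nil => intro w hz _ _; exact absurd hz bk_nil_lt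
  | cons a z ih =>
    intro w hz hpre u
    cases w with
    | nil => exact absurd (List.nil_prefix) hpre
    | cons b w =>
      rcases hz with h1 | ⟨rfl, h2⟩
      · exact Or.inl h1
      · refine Or.inr ⟨rfl, ih w h2 ?_ u⟩
        intro hc
        exact hpre (List.cons_prefix_cons.mpr ⟨rfl, hc⟩)

end BK

theorem bklt_asymm {s t : List ℕ} (h : BKlt s t) : ¬ BKlt t s :=
  bk_asymm (fun _ _ => Nat.lt_asymm) s t h

theorem bklt_irrefl (s : List ℕ) : ¬ BKlt s s := bk_irrefl (fun _ _ => Nat.lt_asymm) s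

theorem bklt_trans {s t u : List ℕ} (h1 : BKlt s t) (h2 : BKlt t u) : BKlt s u :=
  bk_trans (lt := (· < ·)) (fun _ _ _ => Nat.lt_trans) s t u h1 h2

theorem bklt_total (s t : List ℕ) : s = t ∨ BKlt s t ∨ BKlt t s :=
  bk_total (fun a b => by omega) s t

theorem optNodeLt_asymm : ∀ x y : Option (List ℕ), optNodeLt x y → ¬ optNodeLt y x := by
  rintro (_ | x) (_ | y) h hc <;> simp [optNodeLt] at h hc
  exact bklt_asymm h hc

theorem optNodeLt_total : ∀ x y : Option (List ℕ), x = y ∨ optNodeLt x y ∨ optNodeLt y x := by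
  rintro (_ | x) (_ | y)
  · exact Or.inl rfl
  · exact Or.inr (Or.inl trivial)
  · exact Or.inr (Or.inr trivial)
  · rcases bklt_total x y with rfl | h | h
    · exact Or.inl rfl
    · exact Or.inr (Or.inl h)
    · exact Or.inr (Or.inr h)

theorem entryLt_asymm : ∀ x y : Ordinal × Option (List ℕ), entryLt x y → ¬ entryLt y x := by
  rintro ⟨a, x⟩ ⟨b, y⟩ (h | ⟨rfl, h⟩) (h' | ⟨h'', h'⟩)
  · exact absurd h' (lt_asymm h)
  · exact absurd h (h'' ▸ lt_irrefl _)
  · exact absurd h' (lt_irrefl _)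
  · exact optNodeLt_asymm _ _ h h'

theorem entryLt_total : ∀ x y : Ordinal × Option (List ℕ), x = y ∨ entryLt x y ∨ entryLt y x := by
  rintro ⟨a, x⟩ ⟨b, y⟩
  rcases lt_trichotomy a b with h | rfl | h
  · exact Or.inr (Or.inl (Or.inl h))
  · rcases optNodeLt_total x y with rfl | h | h
    · exact Or.inl rfl
    · exact Or.inr (Or.inl (Or.inr ⟨rfl, h⟩))
    · exact Or.inr (Or.inr (Or.inr ⟨rfl, h⟩))
  · exact Or.inr (Or.inr (Or.inl h))

theorem rep2_asymm {s t} (h : Rep2lt s t) : ¬ Rep2lt t s := bk_asymm entryLt_asymm s t h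

theorem rep2_irrefl (s) : ¬ Rep2lt s s := fun h => rep2_asymm h h

theorem rep2_total (s t) : s = t ∨ Rep2lt s t ∨ Rep2lt t s := bk_total entryLt_total s t

end Stmt11Aux

namespace Stmt11Aux

theorem omega0_lt_omega1 : Ordinal.omega0 < omega1 := by
  rw [omega1, Cardinal.lt_ord, Ordinal.card_omega0]
  exact Cardinal.aleph0_lt_aleph_one

theorem add_lt_omega1 {a b : Ordinal} (ha : a < omega1) (hb : b < omega1) :
    a + b < omega1 := by
  rw [omega1, Cardinal.lt_ord] at *
  rw [Ordinal.card_add]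
  exact Cardinal.add_lt_of_lt (Cardinal.aleph0_le_aleph 1) ha hb

theorem resp_mono {P P' : Set (List ℕ)} {f : List ℕ → Ordinal} (hsub : P ⊆ P')
    (h : Respects1 P' f) : Respects1 P f :=
  ⟨fun p hp => h.1 p (hsub hp), fun p hp r hr hlt => h.2 p (hsub hp) r (hsub hr) hlt⟩

theorem resp_congr {P : Set (List ℕ)} {f g : List ℕ → Ordinal}
    (hfg : ∀ p ∈ P, f p = g p) (h : Respects1 P f) : Respects1 P g := by
  constructor
  · intro p hp; rw [← hfg p hp]; exact h.1 p hp
  · intro p hp r hr hlt; rw [← hfg p hp, ← hfg r hr]; exact h.2 p hp r hr hlt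

theorem respP1_fst {P : Set (List ℕ)} {t : Option (List ℕ)} {f : List ℕ → Ordinal}
    {v : Ordinal} (h : RespectsP1 P t f v) : Respects1 P f := by
  cases t with
  | none => exact h.1
  | some s => exact h.1

/-- insertion lemma -/
theorem resp_insert {P : Set (List ℕ)} {s : List ℕ} (hs : s ∉ P)
    {f : List ℕ → Ordinal} (hf : Respects1 P f) {v : Ordinal}
    (hv1 : v < omega1) (hv2 : Order.IsSuccLimit v)
    (hlow : ∀ p ∈ P, BKlt p s → f p < v)
    (hhigh : ∀ p ∈ P, BKlt s p → v < f p) :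
    Respects1 (insert s P) (fun p => if p = s then v else f p) := by
  have hne : ∀ p ∈ P, p ≠ s := fun p hp h => hs (h ▸ hp)
  constructor
  · rintro p (rfl | hp)
    · simpa using ⟨hv1, hv2⟩
    · simp only [if_neg (hne p hp)]; exact hf.1 p hp
  · rintro p (rfl | hp) r (rfl | hr) hlt
    · exact absurd hlt (bklt_irrefl _)
    · simp only [if_pos rfl, if_neg (hne r hr)]; exact hhigh r hr hlt
    · simp only [if_pos rfl, if_neg (hne p hp)]; exact hlow p hp hlt
    · simp only [if_neg (hne p hp), if_neg (hne r hr)]; exact hf.2 p hp r hr hlt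

theorem extract_bounds {P : Set (List ℕ)} {s : List ℕ} (hs : s ∉ P)
    {f : List ℕ → Ordinal} {γ : Ordinal}
    (h : Respects1 (insert s P) (fun p => if p = s then γ else f p)) :
    γ < omega1 ∧ (∀ p ∈ P, BKlt p s → f p < γ) ∧ (∀ p ∈ P, BKlt s p → γ < f p) := by
  have hne : ∀ p ∈ P, p ≠ s := fun p hp hh => hs (hh ▸ hp)
  have hγ : γ < omega1 := by simpa using (h.1 s (Set.mem_insert _ _)).1
  refine ⟨hγ, ?_, ?_⟩
  · intro p hp hlt
    have := h.2 p (Set.mem_insert_of_mem _ hp) s (Set.mem_insert _ _) hlt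
    simpa [if_neg (hne p hp)] using this
  · intro p hp hlt
    have := h.2 s (Set.mem_insert _ _) p (Set.mem_insert_of_mem _ hp) hlt
    simpa [if_neg (hne p hp)] using this

/-- tree structural lemma -/
theorem trchar (Q : Level2Tree) {q : List (List ℕ)} (hq : q ∈ Q.dom) :
    ∀ l ≤ q.length, Q.tr (q.take l) = {p | ∃ i < l, Q.nd (q.take i) = some p} := by
  intro l
  induction l with
  | zero =>
    intro _
    rw [List.take_zero, Q.tr_nil]
    ext p; simp
  | succ l ih =>
    intro hl
    obtain ⟨s, hs, htr⟩ := Q.compl q hq l (by omega)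
    rw [htr, ih (by omega)]
    ext p
    simp only [Set.mem_insert_iff, Set.mem_setOf_eq]
    constructor
    · rintro (rfl | ⟨i, hi, h⟩)
      · exact ⟨l, by omega, hs⟩
      · exact ⟨i, by omega, h⟩
    · rintro ⟨i, hi, h⟩
      rcases Nat.lt_succ_iff_lt_or_eq.mp hi with hi | rfl
      · exact Or.inr ⟨i, hi, h⟩
      · exact Or.inl (Option.some_injective _ (hs.symm.trans h)).symm

theorem trq_char (Q : Level2Tree) {q : List (List ℕ)} (hq : q ∈ Q.dom) :
    Q.tr q = {p | ∃ i < q.length, Q.nd (q.take i) = some p} := by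
  have := trchar Q hq q.length le_rfl
  rwa [List.take_length] at this

theorem tr_take_subset (Q : Level2Tree) {q : List (List ℕ)} (hq : q ∈ Q.dom)
    {l : ℕ} (hl : l ≤ q.length) : Q.tr (q.take l) ⊆ Q.tr q := by
  rw [trchar Q hq l hl, trq_char Q hq]
  rintro p ⟨i, hi, h⟩
  exact ⟨i, by omega, h⟩

theorem node_mem (Q : Level2Tree) {q : List (List ℕ)} (hq : q ∈ Q.dom)
    {i : ℕ} (hi : i < q.length) :
    Q.nd (q.take i) = some (Q.ndVal (q.take i)) ∧ Q.ndVal (q.take i) ∈ Q.tr q := by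
  obtain ⟨s, hs, _⟩ := Q.compl q hq i hi
  have hv : Q.ndVal (q.take i) = s := by rw [Level2Tree.ndVal, hs]; rfl
  rw [hv]
  exact ⟨hs, by rw [trq_char Q hq]; exact ⟨i, hi, hs⟩⟩

end Stmt11Aux

namespace Stmt11Aux

theorem oplus_length (Q : Level2Tree) (f : List ℕ → Ordinal) (q : List (List ℕ)) :
    (Q.oplus f q).length = q.length := by
  simp [Level2Tree.oplus]

theorem oplus_getElem (Q : Level2Tree) (f : List ℕ → Ordinal) (q : List (List ℕ))
    {i : ℕ} (h : i < (Q.oplus f q).length) :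
    (Q.oplus f q)[i] = (f (Q.ndVal (q.take i)), some (q.getD i [])) := by
  simp [Level2Tree.oplus]

theorem oplus_congr {Q : Level2Tree} {q : List (List ℕ)} (hq : q ∈ Q.dom)
    {f g : List ℕ → Ordinal} (h : ∀ p ∈ Q.tr q, g p = f p) :
    Q.oplus g q = Q.oplus f q := by
  unfold Level2Tree.oplus
  apply List.map_congr_left
  intro i hi
  rw [List.mem_range] at hi
  rw [h _ (node_mem Q hq hi).2]

theorem oplus_take {Q : Level2Tree} {q : List (List ℕ)} (f : List ℕ → Ordinal)
    {k : ℕ} (hk : k ≤ q.length) : (Q.oplus f q).take k = Q.oplus f (q.take k) := by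
  apply List.ext_getElem
  · simp [oplus_length, List.length_take]
  · intro i h1 h2
    have hik : i < k := by simp [oplus_length] at h1; omega
    have hiq : i < q.length := by simp [oplus_length] at h1; omega
    rw [List.getElem_take, oplus_getElem, oplus_getElem]
    have h3 : (q.take k).take i = q.take i := by
      rw [List.take_take, min_eq_left (le_of_lt hik)]
    have h4 : (q.take k).getD i [] = q.getD i [] := by
      rw [List.getD_eq_getElem _ _ (by simp [List.length_take]; omega),
        List.getD_eq_getElem _ _ hiq, List.getElem_take]
    rw [h3, h4]

theorem oplus_inj {Q : Level2Tree} {p q : List (List ℕ)} {f g : List ℕ → Ordinal}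
    (h : Q.oplus g p = Q.oplus f q) : p = q := by
  have hl : p.length = q.length := by
    have := congrArg List.length h
    simpa [oplus_length] using this
  apply List.ext_getElem hl
  intro i h1 h2
  have e1 : (Q.oplus g p)[i]'(by rwa [oplus_length]) = (Q.oplus f q)[i]'(by rwa [oplus_length]) :=
    List.getElem_of_eq h _
  rw [oplus_getElem, oplus_getElem] at e1
  have := (Prod.mk.injEq _ _ _ _).mp e1
  have e2 := Option.some_injective _ this.2
  rwa [List.getD_eq_getElem _ _ h1, List.getD_eq_getElem _ _ h2] at e2

theorem oplus_vals {Q : Level2Tree} {q : List (List ℕ)} {f g : List ℕ → Ordinal}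
    (h : Q.oplus g q = Q.oplus f q) :
    ∀ i < q.length, g (Q.ndVal (q.take i)) = f (Q.ndVal (q.take i)) := by
  intro i hi
  have e1 : (Q.oplus g q)[i]'(by rwa [oplus_length]) = (Q.oplus f q)[i]'(by rwa [oplus_length]) :=
    List.getElem_of_eq h _
  rw [oplus_getElem, oplus_getElem] at e1
  exact ((Prod.mk.injEq _ _ _ _).mp e1).1

theorem vals_to_tr {Q : Level2Tree} {q : List (List ℕ)} (hq : q ∈ Q.dom)
    {f g : List ℕ → Ordinal}
    (h : ∀ i < q.length, g (Q.ndVal (q.take i)) = f (Q.ndVal (q.take i))) :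
    ∀ p ∈ Q.tr q, g p = f p := by
  intro p hp
  rw [trq_char Q hq] at hp
  obtain ⟨i, hi, hnd⟩ := hp
  have : Q.ndVal (q.take i) = p := by rw [Level2Tree.ndVal, hnd]; rfl
  rw [← this]
  exact h i hi

end Stmt11Aux

namespace Stmt11Aux

theorem nd_some_not_mem {Q : Level2Tree} {q : List (List ℕ)} (hq : q ∈ Q.dom)
    {s : List ℕ} (hnd : Q.nd q = some s) : s ∉ Q.tr q := by
  have h := Q.ptree q hq
  rw [hnd] at h
  exact h.2.2.2.1

theorem valid_some {Q : Level2Tree} {q : List (List ℕ)} (hq : q ∈ Q.dom)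
    {f : List ℕ → Ordinal} (hf : Respects1 (Q.tr q) f)
    {s : List ℕ} (hnd : Q.nd q = some s) {v : Ordinal}
    (hv1 : v < omega1) (hv2 : Order.IsSuccLimit v)
    (hlow : ∀ p ∈ Q.tr q, BKlt p s → f p < v)
    (hhigh : ∀ p ∈ Q.tr q, BKlt s p → v < f p) :
    RespectsP1 (Q.tr q) (Q.nd q) f v := by
  rw [hnd]
  exact ⟨hf, resp_insert (nd_some_not_mem hq hnd) hf hv1 hv2 hlow hhigh⟩

/-- Given γ placed correctly in the gap of `s = Q.nd q`, `γ + ω` is a valid value. -/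
theorem side_next {Q : Level2Tree} {q : List (List ℕ)} (hq : q ∈ Q.dom)
    {f : List ℕ → Ordinal} (hf : Respects1 (Q.tr q) f)
    (hent : ∀ p ∈ Q.tr q, Ordinal.omega0 < f p ∧ ∀ b < f p, ∀ c < f p, b + c < f p)
    {s : List ℕ} (hnd : Q.nd q = some s) {γ : Ordinal}
    (hins : Respects1 (insert s (Q.tr q)) (fun p => if p = s then γ else f p)) :
    ∃ v, γ < v ∧ RespectsP1 (Q.tr q) (Q.nd q) f v := by
  obtain ⟨hγ1, hlow, hhigh⟩ := extract_bounds (nd_some_not_mem hq hnd) hins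
  refine ⟨γ + Ordinal.omega0, lt_add_of_pos_right _ Ordinal.omega0_pos, ?_⟩
  apply valid_some hq hf hnd (add_lt_omega1 hγ1 omega0_lt_omega1)
    (Ordinal.isSuccLimit_add γ Ordinal.isSuccLimit_omega0)
  · intro p hp hlt
    exact lt_of_lt_of_le (hlow p hp hlt) (le_self_add (a := γ))
  · intro p hp hlt
    exact (hent p hp).2 γ (hhigh p hp hlt) Ordinal.omega0 (hent p hp).1

theorem side_next_none {Q : Level2Tree} {q : List (List ℕ)} (hq : q ∈ Q.dom)
    {f : List ℕ → Ordinal} (hf : Respects1 (Q.tr q) f)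
    (hnd : Q.nd q = none) {γ : Ordinal} (hγ : γ < Ordinal.omega0) :
    ∃ v, γ < v ∧ RespectsP1 (Q.tr q) (Q.nd q) f v := by
  refine ⟨γ + 1, lt_add_of_pos_right _ zero_lt_one, ?_⟩
  rw [hnd]
  refine ⟨hf, ?_⟩
  rw [Ordinal.add_one_eq_succ]
  exact Ordinal.isSuccLimit_omega0.succ_lt hγ

theorem side_nonempty {Q : Level2Tree} {q : List (List ℕ)} (hq : q ∈ Q.dom)
    {f : List ℕ → Ordinal} (hf : Respects1 (Q.tr q) f)
    (hent : ∀ p ∈ Q.tr q, Ordinal.omega0 < f p ∧ ∀ b < f p, ∀ c < f p, b + c < f p) :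
    ∃ v, RespectsP1 (Q.tr q) (Q.nd q) f v := by
  rcases hnd : Q.nd q with _ | s
  · exact ⟨0, hf, Ordinal.omega0_pos⟩
  · have hfin : (Q.tr q).Finite := (Q.ptree q hq).1
    set S : Set Ordinal :=
      insert Ordinal.omega0 ((fun p => f p + Ordinal.omega0) '' {p ∈ Q.tr q | BKlt p s}) with hS
    have hSfin : S.Finite :=
      Set.Finite.insert _ (Set.Finite.image _ (hfin.subset (Set.sep_subset _ _)))
    have hSne : S.Nonempty := ⟨_, Set.mem_insert _ _⟩
    have hvmem : sSup S ∈ S := hSne.csSup_mem hSfin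
    have hbdd : BddAbove S := hSfin.bddAbove
    rw [← hnd]
    refine ⟨sSup S, valid_some hq hf hnd ?_ ?_ ?_ ?_⟩
    · rcases hvmem with h | ⟨p, hp, h⟩
      · rw [h]; exact omega0_lt_omega1
      · rw [← h]; exact add_lt_omega1 (hf.1 p hp.1).1 omega0_lt_omega1
    · rcases hvmem with h | ⟨p, hp, h⟩
      · rw [h]; exact Ordinal.isSuccLimit_omega0
      · rw [← h]; exact Ordinal.isSuccLimit_add _ Ordinal.isSuccLimit_omega0
    · intro p hp hlt
      have hmem : f p + Ordinal.omega0 ∈ S :=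
        Set.mem_insert_of_mem _ ⟨p, ⟨hp, hlt⟩, rfl⟩
      exact lt_of_lt_of_le (lt_add_of_pos_right _ Ordinal.omega0_pos) (le_csSup hbdd hmem)
    · intro p hp hlt
      rcases hvmem with h | ⟨p', hp', h⟩
      · rw [h]; exact (hent p hp).1
      · rw [← h]
        have h1 : f p' < f p := hf.2 p' hp'.1 p hp (bklt_trans hp'.2 hlt)
        exact (hent p hp).2 _ h1 _ (hent p hp).1

end Stmt11Aux

namespace Stmt11Aux

theorem ext_case {Q : Level2Tree} {q : List (List ℕ)} (hq : q ∈ Q.dom)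
    {f : List ℕ → Ordinal} (hf : Respects1 (Q.tr q) f)
    (hent : ∀ p ∈ Q.tr q, Ordinal.omega0 < f p ∧ ∀ b < f p, ∀ c < f p, b + c < f p)
    {r : List (List ℕ)} (hr : r ∈ Q.dom) {g : List ℕ → Ordinal}
    (hg : Respects1 (Q.tr r) g) (hk : q.length < r.length)
    {β : Ordinal} {e : Option (List ℕ)}
    {rest' tail : List (Ordinal × Option (List ℕ))}
    (hzeq : Q.oplus f q ++ (β, e) :: rest' = Q.oplus g r ++ tail) :
    ∃ x ∈ sideSet Q f q, Rep2lt (Q.oplus f q ++ (β, e) :: rest') x := by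
  set k := q.length with hkdef
  have htk : Q.oplus f q = Q.oplus g (r.take k) := by
    have h1 : (Q.oplus f q ++ (β, e) :: rest').take k = Q.oplus f q := by
      rw [List.take_append_of_le_length (by rw [oplus_length])]
      rw [show k = (Q.oplus f q).length from (oplus_length Q f q).symm, List.take_length]
    have h2 : (Q.oplus g r ++ tail).take k = Q.oplus g (r.take k) := by
      rw [List.take_append_of_le_length (by rw [oplus_length]; omega),
        oplus_take g (le_of_lt hk)]
    rw [← h1, hzeq, h2]
  have hrq : r.take k = q := oplus_inj htk.symm
  have htk2 : Q.oplus g q = Q.oplus f q := by have h' := htk.symm; rwa [hrq] at h'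
  have hgf : ∀ p ∈ Q.tr q, g p = f p := vals_to_tr hq (oplus_vals htk2)
  obtain ⟨s, hnds, htrs⟩ := Q.compl r hr k hk
  rw [hrq] at hnds htrs
  have hsub : insert s (Q.tr q) ⊆ Q.tr r := by
    rw [← htrs]; exact tr_take_subset Q hr (by omega)
  have hgi : Respects1 (insert s (Q.tr q)) g := resp_mono hsub hg
  have hsnot : s ∉ Q.tr q := nd_some_not_mem hq hnds
  have hins : Respects1 (insert s (Q.tr q)) (fun p => if p = s then g s else f p) := by
    apply resp_congr _ hgi
    rintro p (rfl | hp)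
    · rw [if_pos rfl]
    · rw [if_neg (fun hh : p = s => hsnot (hh ▸ hp)), hgf p hp]
  obtain ⟨v, hγv, hresp⟩ := side_next hq hf hent hnds hins
  refine ⟨Q.oplusNeg f v q, ⟨f, v, hresp, fun _ _ => rfl, rfl⟩, ?_⟩
  have hklt : k < (Q.oplus f q ++ (β, e) :: rest').length := by
    simp [oplus_length]; omega
  have e1 : (Q.oplus f q ++ (β, e) :: rest')[k]'hklt = (β, e) := by
    rw [List.getElem_append_right (by rw [oplus_length])]
    simp [oplus_length, hkdef]
  have e2 : (Q.oplus f q ++ (β, e) :: rest')[k]'hklt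
      = (g (Q.ndVal (r.take k)), some (r.getD k [])) := by
    rw [List.getElem_of_eq hzeq,
      List.getElem_append_left (by rw [oplus_length]; omega), oplus_getElem]
  have e3 : β = g (Q.ndVal (r.take k)) :=
    ((Prod.mk.injEq _ _ _ _).mp (e1.symm.trans e2)).1
  have hndv : Q.ndVal q = s := by rw [Level2Tree.ndVal, hnds]; rfl
  rw [hrq, hndv] at e3
  show BKltBy entryLt (Q.oplus f q ++ (β, e) :: rest') (Q.oplus f q ++ [(v, none)])
  apply bk_append_left
  exact Or.inl (Or.inl (by rw [e3]; exact hγv))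

end Stmt11Aux

/-- Assume boldface Π¹₁-determinacy. Let `Q` be a level-2 tree,
`q ∈ dom(Q)`, and `ᾱ` respect `Q_tree(q)` with every entry additively closed and
greater than `ω`. Then `ᾱ ⊕ q` is the least upper bound in `(rep(Q), <^Q)` of the
nonempty set of all `ᾱ' ⊕ q⌢(-1) ∈ rep(Q)` with `ᾱ'` respecting `Q(q)` and agreeing
with `ᾱ` on `Q_tree(q)`. -/
theorem stmt11 (hdet : BoldfacePi11Determinacy) (Q : Level2Tree)
    (q : List (List ℕ)) (hq : q ∈ Q.dom) (f : List ℕ → Ordinal)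
    (hf : Respects1 (Q.tr q) f)
    (hent : ∀ p ∈ Q.tr q, Ordinal.omega0 < f p ∧
      ∀ b < f p, ∀ c < f p, b + c < f p) :
    Q.oplus f q ∈ Q.rep ∧
    (sideSet Q f q).Nonempty ∧
    (∀ x ∈ sideSet Q f q, Rep2lt x (Q.oplus f q) ∨ x = Q.oplus f q) ∧
    ∀ z ∈ Q.rep, (∀ x ∈ sideSet Q f q, Rep2lt x z ∨ x = z) →
      (Rep2lt (Q.oplus f q) z ∨ Q.oplus f q = z) := by
  classical
  refine ⟨Or.inl ⟨q, hq, f, hf, rfl⟩, ?_, ?_, ?_⟩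
  · obtain ⟨v, hv⟩ := Stmt11Aux.side_nonempty hq hf hent
    exact ⟨Q.oplusNeg f v q, f, v, hv, fun _ _ => rfl, rfl⟩
  · rintro x ⟨f', v, hresp, hagree, rfl⟩
    left
    have hcong : Q.oplus f' q = Q.oplus f q := Stmt11Aux.oplus_congr hq hagree
    show Rep2lt (Q.oplus f' q ++ [(v, none)]) (Q.oplus f q)
    rw [hcong]
    exact Stmt11Aux.bk_append_right _ _ (by simp)
  · intro z hz hub
    rcases Stmt11Aux.rep2_total (Q.oplus f q) z with heq | hlt | hgt
    · exact Or.inr heq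
    · exact Or.inl hlt
    exfalso
    have claim : ∃ x ∈ sideSet Q f q, Rep2lt z x := by
      by_cases hpre : Q.oplus f q <+: z
      · obtain ⟨rest, rfl⟩ := hpre
        have hrest : rest ≠ [] := by
          rintro rfl
          rw [List.append_nil] at hgt
          exact Stmt11Aux.rep2_irrefl _ hgt
        obtain ⟨⟨β, e⟩, rest', rfl⟩ : ∃ h t, rest = h :: t := by
          cases rest with
          | nil => exact absurd rfl hrest
          | cons h t => exact ⟨h, t, rfl⟩
        rcases hz with ⟨r, hr, g, hg, hzeq⟩ | ⟨r, hr, g, w, hg, hzeq⟩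
        · have hlen : q.length < r.length := by
            have := congrArg List.length hzeq
            simp [Stmt11Aux.oplus_length] at this
            omega
          exact Stmt11Aux.ext_case hq hf hent hr hg hlen (tail := [])
            (by rw [List.append_nil]; exact hzeq)
        · have hzeq' : Q.oplus f q ++ (β, e) :: rest'
              = Q.oplus g r ++ [(w, none)] := hzeq
          have hglen : q.length + (rest'.length + 1) = r.length + 1 := by
            have := congrArg List.length hzeq'
            simpa [Stmt11Aux.oplus_length] using this
          rcases Nat.lt_or_ge q.length r.length with hlen | hlen
          · exact Stmt11Aux.ext_case hq hf hent hr (Stmt11Aux.respP1_fst hg) hlen hzeq'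
          · have hrest0 : rest' = [] := List.length_eq_zero_iff.mp (by omega)
            subst hrest0
            have hinj := List.append_inj' hzeq' (by simp)
            have hopq : Q.oplus g r = Q.oplus f q := hinj.1.symm
            have hrq : r = q := Stmt11Aux.oplus_inj hopq
            rw [hrq] at hg hopq
            have hgf : ∀ p ∈ Q.tr q, g p = f p :=
              Stmt11Aux.vals_to_tr hq (Stmt11Aux.oplus_vals hopq)
            obtain ⟨hβ, he⟩ : β = w ∧ e = none := by simpa using hinj.2
            subst hβ he
            rcases hnd : Q.nd q with _ | s
            · rw [hnd] at hg
              obtain ⟨v, hwv, hresp⟩ := Stmt11Aux.side_next_none hq hf hnd hg.2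
              refine ⟨Q.oplusNeg f v q, ⟨f, v, hresp, fun _ _ => rfl, rfl⟩, ?_⟩
              show BKltBy entryLt (Q.oplus f q ++ [((β : Ordinal), (none : Option (List ℕ)))])
                (Q.oplus f q ++ [(v, none)])
              exact Stmt11Aux.bk_append_left _ (Or.inl (Or.inl hwv))
            · rw [hnd] at hg
              have hsnot : s ∉ Q.tr q := Stmt11Aux.nd_some_not_mem hq hnd
              have hins : Respects1 (insert s (Q.tr q))
                  (fun p => if p = s then β else f p) := by
                apply Stmt11Aux.resp_congr _ hg.2
                rintro p (rfl | hp)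
                · simp
                · rw [if_neg (fun hh : p = s => hsnot (hh ▸ hp)),
                    if_neg (fun hh : p = s => hsnot (hh ▸ hp)), hgf p hp]
              obtain ⟨v, hwv, hresp⟩ := Stmt11Aux.side_next hq hf hent hnd hins
              refine ⟨Q.oplusNeg f v q, ⟨f, v, hresp, fun _ _ => rfl, rfl⟩, ?_⟩
              show BKltBy entryLt (Q.oplus f q ++ [((β : Ordinal), (none : Option (List ℕ)))])
                (Q.oplus f q ++ [(v, none)])
              exact Stmt11Aux.bk_append_left _ (Or.inl (Or.inl hwv))
      · obtain ⟨v, hv⟩ := Stmt11Aux.side_nonempty hq hf hent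
        refine ⟨Q.oplusNeg f v q, ⟨f, v, hv, fun _ _ => rfl, rfl⟩, ?_⟩
        show BKltBy entryLt z (Q.oplus f q ++ [(v, none)])
        exact Stmt11Aux.bk_extend_not_prefix z _ hgt hpre _
    obtain ⟨x, hx, hzx⟩ := claim
    rcases hub x hx with h | rfl
    · exact Stmt11Aux.rep2_asymm hzx h
    · exact Stmt11Aux.rep2_asymm hzx hzx
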